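/- Let F₁,…,F_m be vectors spanning ℝⁿ (with its standard inner product), and suppose there exist ε̄ > 0 and a unit vector v̄ with ⟨F_i, v̄⟩ ≥ ε̄ for all i = 1,…,m. Then for every ε with 0 ≤ ε < ε̄, the set K_ε := {v ∈ ℝⁿ : ⟨F_i, v⟩ ≥ ε‖v‖ for all i} is pointed, i.e. K_ε ∩ (−K_ε) = {0}, and solid, i.e. K_ε has nonempty interior in ℝⁿ. -/

import Mathlib

open scoped RealInnerProductSpace

/-- **Polyhedral cone fields, pointedness and solidness (Example 1, part 2).**
If `F₁, …, F_m` span ℝⁿ (assumption A2) and there are `ε̄ > 0` and a unit vector `v̄` with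
`⟨F_i, v̄⟩ ≥ ε̄` for all `i` (feasibility assumption A3), then for every `0 ≤ ε < ε̄` the cone
`K_ε = {v : ⟨F_i, v⟩ ≥ ε‖v‖ for all i}` is pointed (`K_ε ∩ (−K_ε) = {0}`) and solid
(it has nonempty interior). -/
theorem polyhedral_cone_pointed_solid {n m : ℕ}
    (F : Fin m → EuclideanSpace ℝ (Fin n))
    (hspan : Submodule.span ℝ (Set.range F) = ⊤)
    (εbar : ℝ) (hεbar : 0 < εbar)
    (vbar : EuclideanSpace ℝ (Fin n)) (hvbar : ‖vbar‖ = 1)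
    (hfeas : ∀ i, εbar ≤ ⟪F i, vbar⟫)
    (ε : ℝ) (hε0 : 0 ≤ ε) (hε : ε < εbar) :
    {v : EuclideanSpace ℝ (Fin n) | ∀ i, ε * ‖v‖ ≤ ⟪F i, v⟫} ∩
      (-{v : EuclideanSpace ℝ (Fin n) | ∀ i, ε * ‖v‖ ≤ ⟪F i, v⟫}) = {0} ∧
    (interior {v : EuclideanSpace ℝ (Fin n) | ∀ i, ε * ‖v‖ ≤ ⟪F i, v⟫}).Nonempty := by
  constructor
  · apply Set.eq_singleton_iff_unique_mem.mpr
    constructor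
    · constructor
      · intro i; simp
      · simp only [Set.mem_neg, Set.mem_setOf_eq, neg_zero]
        intro i; simp
    · rintro v ⟨hv, hv'⟩
      simp only [Set.mem_neg, Set.mem_setOf_eq] at hv hv'
      have hz : ∀ i, ⟪F i, v⟫ = 0 := by
        intro i
        have h1 := hv i
        have h2 := hv' i
        rw [inner_neg_right, norm_neg] at h2
        have h0 : 0 ≤ ε * ‖v‖ := mul_nonneg hε0 (norm_nonneg v)
        linarith
      have hvmem : v ∈ (Submodule.span ℝ (Set.range F))ᗮ := by
        apply (Submodule.mem_orthogonal (Submodule.span ℝ (Set.range F)) v).mpr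
        intro x hx
        induction hx using Submodule.span_induction with
        | mem x hx => obtain ⟨i, rfl⟩ := hx; exact hz i
        | zero => simp
        | add x y _ _ hx hy => rw [inner_add_left, hx, hy]; ring
        | smul c x _ hx => rw [inner_smul_left, hx]; simp
      rw [hspan, Submodule.top_orthogonal_eq_bot, Submodule.mem_bot] at hvmem
      exact hvmem
  · set M : ℝ := ((Finset.univ.sup fun i => ‖F i‖₊ : NNReal) : ℝ) with hM
    have hMnn : (0:ℝ) ≤ M := NNReal.coe_nonneg _
    have hMle : ∀ i, ‖F i‖ ≤ M := by
      intro i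
      have : ‖F i‖₊ ≤ Finset.univ.sup fun i => ‖F i‖₊ := Finset.le_sup (f := fun i => ‖F i‖₊) (Finset.mem_univ i)
      rw [hM]
      exact_mod_cast this
    set δ : ℝ := (εbar - ε) / (M + ε + 1) with hδdef
    have hδpos : 0 < δ := div_pos (by linarith) (by linarith)
    refine ⟨vbar, ?_⟩
    apply mem_interior.mpr
    refine ⟨Metric.ball vbar δ, ?_, Metric.isOpen_ball, Metric.mem_ball_self hδpos⟩
    intro v hv
    simp only [Metric.mem_ball, dist_eq_norm] at hv
    intro i
    have h1 : ⟪F i, v⟫ = ⟪F i, vbar⟫ + ⟪F i, v - vbar⟫ := by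
      rw [← inner_add_right]
      congr 1
      abel
    have h2 : |⟪F i, v - vbar⟫| ≤ M * δ := by
      calc |⟪F i, v - vbar⟫| ≤ ‖F i‖ * ‖v - vbar‖ := abs_real_inner_le_norm _ _
        _ ≤ M * δ := by
          apply mul_le_mul (hMle i) hv.le (norm_nonneg _) hMnn
    have h3 : ‖v‖ ≤ 1 + δ := by
      calc ‖v‖ = ‖vbar + (v - vbar)‖ := by congr 1; abel
        _ ≤ ‖vbar‖ + ‖v - vbar‖ := norm_add_le _ _
        _ ≤ 1 + δ := by rw [hvbar]; linarith
    have hfrac : δ * (M + ε) ≤ εbar - ε := by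
      rw [hδdef]
      rw [div_mul_eq_mul_div, div_le_iff₀ (by linarith)]
      nlinarith
    have habs := abs_le.mp h2
    have := hfeas i
    nlinarith [mul_le_mul_of_nonneg_left h3 hε0]
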